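/- (Monotonicity in supply) Let all buyers have strong gross substitutes valuations and let b' ≤ b be two supply vectors. If p and p' are the minimal (resp. maximal) Walrasian price vectors for supplies b and b', then p(e) ≤ p'(e) for every item e with b'(e) > 0: decreasing the supply can only increase the minimal and maximal Walrasian prices on the remaining items. -/
import Mathlib


open Finset

variable {E : Type*} [Fintype E] [DecidableEq E]

/-- Characteristic (unit) vector of an item. -/
def chi (e : E) : E → ℤ := fun f => if f = e then 1 else 0

/-- The integer box `[0, b]_ℤ` of bundles. -/
def Box (b : E → ℤ) : Set (E → ℤ) := {z | ∀ e, 0 ≤ z e ∧ z e ≤ b e}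

/-- Quasi-linear utility of a bundle at prices `p`. -/
noncomputable def util (v : (E → ℤ) → ℤ) (p : E → ℝ) (z : E → ℤ) : ℝ :=
  (v z : ℝ) - ∑ e : E, p e * (z e : ℝ)

/-- Demand set: utility-maximizing bundles in the box. -/
def Demand (b : E → ℤ) (v : (E → ℤ) → ℤ) (p : E → ℝ) : Set (E → ℤ) :=
  {z | z ∈ Box b ∧ ∀ y ∈ Box b, util v p y ≤ util v p z}

/-- Componentwise minimal preferred bundles. -/
def MinDemand (b : E → ℤ) (v : (E → ℤ) → ℤ) (p : E → ℝ) : Set (E → ℤ) :=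
  {z | z ∈ Demand b v p ∧ ∀ y ∈ Demand b v p, y ≤ z → y = z}

/-- Componentwise maximal preferred bundles. -/
def MaxDemand (b : E → ℤ) (v : (E → ℤ) → ℤ) (p : E → ℝ) : Set (E → ℤ) :=
  {z | z ∈ Demand b v p ∧ ∀ y ∈ Demand b v p, z ≤ y → y = z}

/-- M♮-concavity, equivalent to the strong gross substitutes property. -/
def MNatConcave (b : E → ℤ) (v : (E → ℤ) → ℤ) : Prop :=
  ∀ x ∈ Box b, ∀ y ∈ Box b, ∀ e : E, y e < x e →
    v x + v y ≤ v (x - chi e) + v (y + chi e) ∨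
    ∃ f : E, x f < y f ∧ v x + v y ≤ v (x - chi e + chi f) + v (y + chi e - chi f)

/-- M-convex set: exchange property. -/
def MConvex (B : Set (E → ℤ)) : Prop :=
  ∀ x ∈ B, ∀ y ∈ B, ∀ e : E, y e < x e →
    ∃ f : E, x f < y f ∧ x - chi e + chi f ∈ B ∧ y + chi e - chi f ∈ B

/-- `ρ` is the rank function of `B`: `ρ S = max {z(S) : z ∈ B}`. -/
def IsRank (B : Set (E → ℤ)) (ρ : Finset E → ℤ) : Prop :=
  ∀ S : Finset E, IsGreatest ((fun z : E → ℤ => ∑ e ∈ S, z e) '' B) (ρ S)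

/-- Prices `p` are packing: a choice of preferred bundles oversells no item. -/
def Packing {N : Type*} [Fintype N] (b : E → ℤ) (v : N → (E → ℤ) → ℤ) (p : E → ℝ) : Prop :=
  ∃ z : N → E → ℤ, (∀ i, z i ∈ Demand b (v i) p) ∧ ∀ e, ∑ i, z i e ≤ b e

/-- Prices `p` are covering: a choice of preferred bundles sells all items. -/
def Covering {N : Type*} [Fintype N] (b : E → ℤ) (v : N → (E → ℤ) → ℤ) (p : E → ℝ) : Prop :=
  ∃ z : N → E → ℤ, (∀ i, z i ∈ Demand b (v i) p) ∧ ∀ e, b e ≤ ∑ i, z i e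

/-- Prices `p` are Walrasian: a choice of preferred bundles exactly exhausts the supply. -/
def Walrasian {N : Type*} [Fintype N] (b : E → ℤ) (v : N → (E → ℤ) → ℤ) (p : E → ℝ) : Prop :=
  ∃ z : N → E → ℤ, (∀ i, z i ∈ Demand b (v i) p) ∧ ∀ e, ∑ i, z i e = b e

set_option linter.unusedSectionVars false
set_option linter.unusedVariables false

/-! ### Auxiliary lemmas for the proof -/

section AuxLemmas

variable {b c b' : E → ℤ} {v : (E → ℤ) → ℤ} {p q : E → ℝ} {w z t : E → ℤ} {f g : E}

lemma box_eq_Icc (b : E → ℤ) : Box b = Set.Icc 0 b := by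
  ext z
  simp [Box, Set.mem_Icc, Pi.le_def, forall_and]

lemma box_finite (b : E → ℤ) : (Box b).Finite := by
  rw [box_eq_Icc]; exact Set.finite_Icc _ _

lemma zero_mem_box (hb : 0 ≤ b) : (0 : E → ℤ) ∈ Box b :=
  fun e => ⟨le_rfl, hb e⟩

lemma box_mono (hbb : b' ≤ b) (hz : z ∈ Box b') : z ∈ Box b :=
  fun e => ⟨(hz e).1, (hz e).2.trans (hbb e)⟩

lemma demand_nonempty (hb : 0 ≤ b) (v : (E → ℤ) → ℤ) (p : E → ℝ) :
    (Demand b v p).Nonempty := by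
  obtain ⟨z, hz, hmax⟩ :=
    Set.exists_max_image (Box b) (util v p) (box_finite b) ⟨0, zero_mem_box hb⟩
  exact ⟨z, hz, hmax⟩

lemma demand_finite : (Demand b v p).Finite :=
  (box_finite b).subset fun z hz => hz.1

lemma exists_phi_min (hb : 0 ≤ b) (v : (E → ℤ) → ℤ) (p : E → ℝ) (t : E → ℤ) :
    ∃ z ∈ Demand b v p, ∀ w ∈ Demand b v p,
      (∑ f : E, |z f - t f|) ≤ ∑ f : E, |w f - t f| :=
  Set.exists_min_image _ _ demand_finite (demand_nonempty hb v p)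

lemma box_add_chi (hz : z ∈ Box c) (hf : z f < c f) : z + chi f ∈ Box c := by
  intro e
  have h1 := hz e
  by_cases he : e = f
  · subst he; simp only [Pi.add_apply, chi, if_pos rfl]; omega
  · simp only [Pi.add_apply, chi, if_neg he]; omega

lemma box_sub_chi (hz : z ∈ Box c) (hf : 0 < z f) : z - chi f ∈ Box c := by
  intro e
  have h1 := hz e
  by_cases he : e = f
  · subst he; simp only [Pi.sub_apply, chi, if_pos rfl]; omega
  · simp only [Pi.sub_apply, chi, if_neg he]; omega

lemma box_sub_add_chi (hz : z ∈ Box c) (hf : 0 < z f) (hg : z g < c g) :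
    z - chi f + chi g ∈ Box c := by
  intro e
  have h1 := hz e
  simp only [Pi.add_apply, Pi.sub_apply, chi]
  by_cases hef : e = f
  · subst hef
    by_cases heg : e = g
    · subst heg; simp only [if_pos rfl]; omega
    · simp only [if_pos rfl, if_neg heg]; omega
  · by_cases heg : e = g
    · subst heg; simp only [if_neg hef, if_pos rfl]; omega
    · simp only [if_neg hef, if_neg heg]; omega

lemma box_add_sub_chi (hz : z ∈ Box c) (hf : z f < c f) (hg : 0 < z g) :
    z + chi f - chi g ∈ Box c := by
  intro e
  have h1 := hz e
  simp only [Pi.add_apply, Pi.sub_apply, chi]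
  by_cases hef : e = f
  · subst hef
    by_cases heg : e = g
    · subst heg; simp only [if_pos rfl]; omega
    · simp only [if_pos rfl, if_neg heg]; omega
  · by_cases heg : e = g
    · subst heg; simp only [if_neg hef, if_pos rfl]; omega
    · simp only [if_neg hef, if_neg heg]; omega

lemma util_comp (v : (E → ℤ) → ℤ) (p : E → ℝ) (w : E → ℤ) :
    util v p w = (v w : ℝ) - ∑ e : E, p e * (w e : ℝ) := rfl

lemma sum_mul_chi (p : E → ℝ) (f : E) :
    ∑ e : E, p e * ((chi f e : ℤ) : ℝ) = p f := by
  have h : ∀ e : E, p e * ((chi f e : ℤ) : ℝ) = if e = f then p e else 0 := by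
    intro e; by_cases he : e = f <;> simp [chi, he]
  rw [Finset.sum_congr rfl fun e _ => h e]
  simp

lemma sum_add_chi (p : E → ℝ) (w : E → ℤ) (f : E) :
    ∑ e : E, p e * (((w + chi f) e : ℤ) : ℝ)
      = (∑ e : E, p e * (w e : ℝ)) + p f := by
  simp only [Pi.add_apply, Int.cast_add, mul_add, Finset.sum_add_distrib, sum_mul_chi]

lemma sum_sub_chi (p : E → ℝ) (w : E → ℤ) (f : E) :
    ∑ e : E, p e * (((w - chi f) e : ℤ) : ℝ)
      = (∑ e : E, p e * (w e : ℝ)) - p f := by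
  simp only [Pi.sub_apply, Int.cast_sub, mul_sub, Finset.sum_sub_distrib, sum_mul_chi]

lemma sum_sub_add_chi (p : E → ℝ) (w : E → ℤ) (f g : E) :
    ∑ e : E, p e * (((w - chi f + chi g) e : ℤ) : ℝ)
      = (∑ e : E, p e * (w e : ℝ)) - p f + p g := by
  simp only [Pi.add_apply, Pi.sub_apply, Int.cast_add, Int.cast_sub, mul_add, mul_sub,
    Finset.sum_add_distrib, Finset.sum_sub_distrib, sum_mul_chi]

lemma sum_add_sub_chi (p : E → ℝ) (w : E → ℤ) (f g : E) :
    ∑ e : E, p e * (((w + chi f - chi g) e : ℤ) : ℝ)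
      = (∑ e : E, p e * (w e : ℝ)) + p f - p g := by
  simp only [Pi.add_apply, Pi.sub_apply, Int.cast_add, Int.cast_sub, mul_add, mul_sub,
    Finset.sum_add_distrib, Finset.sum_sub_distrib, sum_mul_chi]

lemma chi_apply (f e : E) : chi f e = if e = f then 1 else 0 := rfl

lemma abs_help1 (a c : ℤ) (h : c < a) : |a - 1 - c| < |a - c| := by
  rw [abs_of_nonneg (by omega), abs_of_nonneg (by omega)]; omega

lemma abs_help2 (a c : ℤ) (h : a < c) : |a + 1 - c| < |a - c| := by
  rw [abs_of_nonpos (by omega), abs_of_nonpos (by omega)]; omega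

lemma phi_sub_lt (h : t f < w f) :
    (∑ e : E, |(w - chi f) e - t e|) < ∑ e : E, |w e - t e| := by
  apply Finset.sum_lt_sum
  · intro e _
    simp only [Pi.sub_apply, chi_apply]
    by_cases he : e = f
    · subst he
      simp only [if_pos rfl]
      exact le_of_lt (abs_help1 _ _ h)
    · simp only [if_neg he, sub_zero, le_refl]
  · refine ⟨f, mem_univ f, ?_⟩
    simp only [Pi.sub_apply, chi_apply, if_pos rfl]
    exact abs_help1 _ _ h

lemma phi_add_lt (h : w f < t f) :
    (∑ e : E, |(w + chi f) e - t e|) < ∑ e : E, |w e - t e| := by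
  apply Finset.sum_lt_sum
  · intro e _
    simp only [Pi.add_apply, chi_apply]
    by_cases he : e = f
    · subst he
      simp only [if_pos rfl]
      exact le_of_lt (abs_help2 _ _ h)
    · simp only [if_neg he, add_zero, le_refl]
  · refine ⟨f, mem_univ f, ?_⟩
    simp only [Pi.add_apply, chi_apply, if_pos rfl]
    exact abs_help2 _ _ h

lemma phi_sub_add_lt (hf : t f < w f) (hg : w g < t g) :
    (∑ e : E, |(w - chi f + chi g) e - t e|) < ∑ e : E, |w e - t e| := by
  have hfg : f ≠ g := by rintro rfl; omega
  apply Finset.sum_lt_sum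
  · intro e _
    simp only [Pi.add_apply, Pi.sub_apply, chi_apply]
    by_cases hef : e = f
    · subst hef
      simp only [if_pos rfl, if_neg hfg, add_zero]
      exact le_of_lt (abs_help1 _ _ hf)
    · by_cases heg : e = g
      · subst heg
        simp only [if_neg hef, if_pos rfl, sub_zero]
        exact le_of_lt (abs_help2 _ _ hg)
      · simp only [if_neg hef, if_neg heg, sub_zero, add_zero, le_refl]
  · refine ⟨f, mem_univ f, ?_⟩
    simp only [Pi.add_apply, Pi.sub_apply, chi_apply, if_pos rfl, if_neg hfg, add_zero]
    exact abs_help1 _ _ hf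

lemma phi_add_sub_lt (hf : w f < t f) (hg : t g < w g) :
    (∑ e : E, |(w + chi f - chi g) e - t e|) < ∑ e : E, |w e - t e| := by
  have hfg : f ≠ g := by rintro rfl; omega
  apply Finset.sum_lt_sum
  · intro e _
    simp only [Pi.add_apply, Pi.sub_apply, chi_apply]
    by_cases hef : e = f
    · subst hef
      simp only [if_pos rfl, if_neg hfg, sub_zero]
      exact le_of_lt (abs_help2 _ _ hf)
    · by_cases heg : e = g
      · subst heg
        simp only [if_neg hef, if_pos rfl, add_zero]
        exact le_of_lt (abs_help1 _ _ hg)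
      · simp only [if_neg hef, if_neg heg, sub_zero, add_zero, le_refl]
  · refine ⟨f, mem_univ f, ?_⟩
    simp only [Pi.add_apply, Pi.sub_apply, chi_apply, if_pos rfl, if_neg hfg, sub_zero]
    exact abs_help2 _ _ hf

lemma agg_util {N : Type*} [Fintype N] (v : N → (E → ℤ) → ℤ) (P Q : E → ℝ) (w : N → E → ℤ) :
    (∑ i, util (v i) Q (w i))
      = (∑ i, util (v i) P (w i)) + ∑ f : E, (P f - Q f) * ((∑ i, w i f : ℤ) : ℝ) := by
  have h1 : ∀ i, util (v i) Q (w i)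
      = util (v i) P (w i) + ∑ f : E, (P f - Q f) * (w i f : ℝ) := by
    intro i
    rw [util_comp, util_comp]
    have h2 : (∑ f : E, (P f - Q f) * (w i f : ℝ))
        = (∑ f : E, P f * (w i f : ℝ)) - ∑ f : E, Q f * (w i f : ℝ) := by
      rw [← Finset.sum_sub_distrib]
      exact Finset.sum_congr rfl fun f _ => by ring
    rw [h2]; ring
  rw [Finset.sum_congr rfl fun i _ => h1 i, Finset.sum_add_distrib]
  congr 1
  rw [Finset.sum_comm]
  refine Finset.sum_congr rfl fun f _ => ?_
  rw [← Finset.mul_sum]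
  norm_cast

end AuxLemmas
lemma min_aux {N : Type*} [Fintype N] {b b' : E → ℤ} (hb' : 0 ≤ b') (hbb : b' ≤ b)
    (v : N → (E → ℤ) → ℤ) (hsgs : ∀ i, MNatConcave b (v i))
    {p p' : E → ℝ}
    (hw : Walrasian b v p) (hw' : Walrasian b' v p') :
    Walrasian b v (fun f => if 0 < b' f then min (p f) (p' f) else p f) := by
  classical
  obtain ⟨x, hx, hxs⟩ := hw
  obtain ⟨y, hy, hys⟩ := hw'
  have hb : (0 : E → ℤ) ≤ b := hb'.trans hbb
  set q : E → ℝ := fun f => if 0 < b' f then min (p f) (p' f) else p f with hqdef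
  have hqf : ∀ f, q f = if 0 < b' f then min (p f) (p' f) else p f := fun f => rfl
  have hqle : ∀ f, q f ≤ p f := by
    intro f; rw [hqf]
    split
    · exact min_le_left _ _
    · exact le_rfl
  have hqlt : ∀ f, q f < p f → 0 < b' f ∧ q f = p' f := by
    intro f hf
    rw [hqf] at hf ⊢
    by_cases h : 0 < b' f
    · rw [if_pos h] at hf ⊢
      refine ⟨h, ?_⟩
      rcases min_cases (p f) (p' f) with ⟨h1, _⟩ | ⟨h1, _⟩
      · rw [h1] at hf; linarith
      · exact h1
    · rw [if_neg h] at hf; linarith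
  have hq'le : ∀ f, 0 < b' f → q f ≤ p' f := by
    intro f hf; rw [hqf, if_pos hf]; exact min_le_right _ _
  have hch : ∀ i : N, ∃ z ∈ Demand b (v i) q, ∀ w ∈ Demand b (v i) q,
      (∑ f : E, |z f - y i f|) ≤ ∑ f : E, |w f - y i f| :=
    fun i => exists_phi_min hb (v i) q (y i)
  choose z hz hzmin using hch
  have hz0 : ∀ i f, 0 ≤ z i f := fun i f => ((hz i).1 f).1
  have hy0 : ∀ i f, 0 ≤ y i f := fun i f => ((hy i).1 f).1
  -- key claim: at prices q, the chosen demand does not exceed b on discounted items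
  have key : ∀ f, q f < p f → (∑ i, z i f) ≤ b f := by
    intro f hfq
    by_contra hover
    push_neg at hover
    obtain ⟨hbf, hqp⟩ := hqlt f hfq
    obtain ⟨j, hjy, hjb⟩ : ∃ j, y j f < z j f ∧ y j f < b' f := by
      by_contra hcon
      push_neg at hcon
      by_cases hA : ∀ i, z i f ≤ y i f
      · have h1 : (∑ i, z i f) ≤ ∑ i, y i f := Finset.sum_le_sum fun i _ => hA i
        have h2 := hys f; have h3 : b' f ≤ b f := hbb f
        omega
      · push_neg at hA
        obtain ⟨j0, hj0⟩ := hA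
        have hj0' : b' f ≤ y j0 f := hcon j0 hj0
        have e1 : y j0 f + ∑ i ∈ Finset.univ.erase j0, y i f = ∑ i, y i f := by
          simpa using Finset.add_sum_erase Finset.univ (fun i => y i f) (mem_univ j0)
        have h2 := hys f
        have hzero : ∀ i ∈ Finset.univ.erase j0, z i f ≤ 0 := by
          intro i hi
          have hine := (Finset.mem_erase.mp hi).1
          by_contra hzi
          push_neg at hzi
          have e2 : y i f ≤ ∑ k ∈ Finset.univ.erase j0, y k f :=
            Finset.single_le_sum (fun k _ => hy0 k f)
              (Finset.mem_erase.mpr ⟨hine, mem_univ i⟩)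
          have hsum_nonneg : (0:ℤ) ≤ ∑ k ∈ Finset.univ.erase j0, y k f :=
            Finset.sum_nonneg fun k _ => hy0 k f
          have hyi0 : y i f = 0 := by
            have := hy0 i f
            omega
          have := hcon i (by omega)
          omega
        have e3 : z j0 f + ∑ i ∈ Finset.univ.erase j0, z i f = ∑ i, z i f := by
          simpa using Finset.add_sum_erase Finset.univ (fun i => z i f) (mem_univ j0)
        have e4 : (∑ i ∈ Finset.univ.erase j0, z i f) ≤ 0 := Finset.sum_nonpos hzero
        have e5 : z j0 f ≤ b f := ((hz j0).1 f).2
        omega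
    have hybox' : y j ∈ Box b' := (hy j).1
    have hzbox : z j ∈ Box b := (hz j).1
    have hybox : y j ∈ Box b := box_mono hbb hybox'
    rcases hsgs j (z j) hzbox (y j) hybox f hjy with hex | ⟨g, hgy, hex⟩
    · -- case 1 : single decrement
      have hyc : y j + chi f ∈ Box b' := box_add_chi hybox' hjb
      have hyopt := (hy j).2 _ hyc
      have hzc : z j - chi f ∈ Box b := box_sub_chi hzbox (by have := hy0 j f; omega)
      have hexR : ((v j (z j) : ℝ)) + v j (y j)
          ≤ v j (z j - chi f) + v j (y j + chi f) := by exact_mod_cast hex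
      have hstep : util (v j) q (z j) ≤ util (v j) q (z j - chi f) := by
        rw [util_comp, util_comp, sum_add_chi] at hyopt
        rw [util_comp, util_comp, sum_sub_chi]
        linarith [hqp]
      have hmem : z j - chi f ∈ Demand b (v j) q :=
        ⟨hzc, fun w hw => ((hz j).2 w hw).trans hstep⟩
      have hlt := phi_sub_lt (t := y j) (w := z j) (f := f) hjy
      exact absurd (hzmin j _ hmem) (not_le.mpr hlt)
    · -- case 2 : exchange f for g
      have hgS : 0 < b' g := by
        have h1 := (hybox' g).2; have h2 := hz0 j g; omega
      have hq'g : q g ≤ p' g := hq'le g hgS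
      have hyc : y j + chi f - chi g ∈ Box b' :=
        box_add_sub_chi hybox' hjb (by have := hz0 j g; omega)
      have hzc : z j - chi f + chi g ∈ Box b :=
        box_sub_add_chi hzbox (by have := hy0 j f; omega)
          (by have h1 := (hybox' g).2; have h2 : b' g ≤ b g := hbb g; omega)
      have hyopt := (hy j).2 _ hyc
      have hexR : ((v j (z j) : ℝ)) + v j (y j)
          ≤ v j (z j - chi f + chi g) + v j (y j + chi f - chi g) := by exact_mod_cast hex
      have hstep : util (v j) q (z j) ≤ util (v j) q (z j - chi f + chi g) := by
        rw [util_comp, util_comp, sum_add_sub_chi] at hyopt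
        rw [util_comp, util_comp, sum_sub_add_chi]
        linarith [hqp, hq'g]
      have hmem : z j - chi f + chi g ∈ Demand b (v j) q :=
        ⟨hzc, fun w hw => ((hz j).2 w hw).trans hstep⟩
      have hlt := phi_sub_add_lt (t := y j) (w := z j) hjy hgy
      exact absurd (hzmin j _ hmem) (not_le.mpr hlt)
  -- conclude : x itself is optimal at q
  have hpt : ∀ i, util (v i) q (x i) ≤ util (v i) q (z i) := fun i => (hz i).2 _ (hx i).1
  have hsum : (∑ i, util (v i) q (z i)) ≤ ∑ i, util (v i) q (x i) := by
    rw [agg_util v p q z, agg_util v p q x]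
    have h1 : (∑ i, util (v i) p (z i)) ≤ ∑ i, util (v i) p (x i) :=
      Finset.sum_le_sum fun i _ => (hx i).2 _ (hz i).1
    have h2 : (∑ f : E, (p f - q f) * ((∑ i, z i f : ℤ) : ℝ))
        ≤ ∑ f : E, (p f - q f) * ((∑ i, x i f : ℤ) : ℝ) := by
      refine Finset.sum_le_sum fun f _ => ?_
      rcases eq_or_lt_of_le (hqle f) with h | h
      · rw [← h]; simp
      · have hk : ((∑ i, z i f : ℤ) : ℝ) ≤ ((∑ i, x i f : ℤ) : ℝ) := by
          have := key f h
          rw [hxs f]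
          exact_mod_cast this
        have : (0:ℝ) ≤ p f - q f := by linarith
        exact mul_le_mul_of_nonneg_left hk this
    linarith
  have heq : ∀ i, util (v i) q (x i) = util (v i) q (z i) := by
    intro i
    by_contra hne
    have hlt : util (v i) q (x i) < util (v i) q (z i) := lt_of_le_of_ne (hpt i) hne
    have : (∑ k, util (v k) q (x k)) < ∑ k, util (v k) q (z k) :=
      Finset.sum_lt_sum (fun k _ => hpt k) ⟨i, mem_univ i, hlt⟩
    linarith
  exact ⟨x, fun i => ⟨(hx i).1, fun w hw => ((hz i).2 w hw).trans (heq i).ge⟩, hxs⟩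
lemma max_aux {N : Type*} [Fintype N] {b b' : E → ℤ} (hb' : 0 ≤ b') (hbb : b' ≤ b)
    (v : N → (E → ℤ) → ℤ) (hsgs : ∀ i, MNatConcave b (v i))
    {p p' : E → ℝ}
    (hw : Walrasian b v p) (hw' : Walrasian b' v p') :
    Walrasian b' v (fun f => if 0 < b' f then max (p f) (p' f) else p' f) := by
  classical
  obtain ⟨x, hx, hxs⟩ := hw
  obtain ⟨y, hy, hys⟩ := hw'
  set r : E → ℝ := fun f => if 0 < b' f then max (p f) (p' f) else p' f with hrdef
  have hrf : ∀ f, r f = if 0 < b' f then max (p f) (p' f) else p' f := fun f => rfl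
  have hrge : ∀ f, p' f ≤ r f := by
    intro f; rw [hrf]
    split
    · exact le_max_right _ _
    · exact le_rfl
  have hrlt : ∀ f, p' f < r f → 0 < b' f ∧ r f = p f := by
    intro f hf
    rw [hrf] at hf ⊢
    by_cases h : 0 < b' f
    · rw [if_pos h] at hf ⊢
      refine ⟨h, ?_⟩
      rcases max_cases (p f) (p' f) with ⟨h1, _⟩ | ⟨h1, _⟩
      · exact h1
      · rw [h1] at hf; linarith
    · rw [if_neg h] at hf; linarith
  have hrgep : ∀ f, 0 < b' f → p f ≤ r f := by
    intro f hf; rw [hrf, if_pos hf]; exact le_max_left _ _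
  have hch : ∀ i : N, ∃ z ∈ Demand b' (v i) r, ∀ w ∈ Demand b' (v i) r,
      (∑ f : E, |z f - x i f|) ≤ ∑ f : E, |w f - x i f| :=
    fun i => exists_phi_min hb' (v i) r (x i)
  choose z hz hzmin using hch
  have hz0 : ∀ i f, 0 ≤ z i f := fun i f => ((hz i).1 f).1
  have hx0 : ∀ i f, 0 ≤ x i f := fun i f => ((hx i).1 f).1
  -- key : at prices r the chosen demand covers b' on items with raised price
  have key : ∀ f, p' f < r f → b' f ≤ ∑ i, z i f := by
    intro f hfr
    by_contra hover
    push_neg at hover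
    obtain ⟨hbf, hrp⟩ := hrlt f hfr
    obtain ⟨j, hj⟩ : ∃ j, z j f < x j f := by
      by_contra hcon
      push_neg at hcon
      have h1 : (∑ i, x i f) ≤ ∑ i, z i f := Finset.sum_le_sum fun i _ => hcon i
      have h2 := hxs f; have h3 : b' f ≤ b f := hbb f
      omega
    have hjb : z j f < b' f := by
      have h1 : z j f ≤ ∑ i, z i f :=
        Finset.single_le_sum (fun i _ => hz0 i f) (mem_univ j)
      omega
    have hzbox' : z j ∈ Box b' := (hz j).1
    have hzbox : z j ∈ Box b := box_mono hbb hzbox'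
    have hxbox : x j ∈ Box b := (hx j).1
    rcases hsgs j (x j) hxbox (z j) hzbox f hj with hex | ⟨g, hgx, hex⟩
    · -- case 1 : single increment
      have hxc : x j - chi f ∈ Box b := box_sub_chi hxbox (by have := hz0 j f; omega)
      have hxopt := (hx j).2 _ hxc
      have hzc : z j + chi f ∈ Box b' := box_add_chi hzbox' hjb
      have hexR : ((v j (x j) : ℝ)) + v j (z j)
          ≤ v j (x j - chi f) + v j (z j + chi f) := by exact_mod_cast hex
      have hstep : util (v j) r (z j) ≤ util (v j) r (z j + chi f) := by
        rw [util_comp, util_comp, sum_sub_chi] at hxopt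
        rw [util_comp, util_comp, sum_add_chi]
        linarith [hrp]
      have hmem : z j + chi f ∈ Demand b' (v j) r :=
        ⟨hzc, fun w hw => ((hz j).2 w hw).trans hstep⟩
      have hlt := phi_add_lt (t := x j) (w := z j) (f := f) hj
      exact absurd (hzmin j _ hmem) (not_le.mpr hlt)
    · -- case 2 : exchange
      have hgS : 0 < b' g := by
        have h1 := (hzbox' g).2; have h2 := hx0 j g; omega
      have hrg : p g ≤ r g := hrgep g hgS
      have hxc : x j - chi f + chi g ∈ Box b :=
        box_sub_add_chi hxbox (by have := hz0 j f; omega)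
          (by have h1 := (hzbox' g).2; have h2 : b' g ≤ b g := hbb g; omega)
      have hzc : z j + chi f - chi g ∈ Box b' :=
        box_add_sub_chi hzbox' hjb (by have := hx0 j g; omega)
      have hxopt := (hx j).2 _ hxc
      have hexR : ((v j (x j) : ℝ)) + v j (z j)
          ≤ v j (x j - chi f + chi g) + v j (z j + chi f - chi g) := by exact_mod_cast hex
      have hstep : util (v j) r (z j) ≤ util (v j) r (z j + chi f - chi g) := by
        rw [util_comp, util_comp, sum_sub_add_chi] at hxopt
        rw [util_comp, util_comp, sum_add_sub_chi]
        linarith [hrp, hrg]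
      have hmem : z j + chi f - chi g ∈ Demand b' (v j) r :=
        ⟨hzc, fun w hw => ((hz j).2 w hw).trans hstep⟩
      have hlt := phi_add_sub_lt (t := x j) (w := z j) hj hgx
      exact absurd (hzmin j _ hmem) (not_le.mpr hlt)
  -- conclude : y itself is optimal at r
  have hpt : ∀ i, util (v i) r (y i) ≤ util (v i) r (z i) := fun i => (hz i).2 _ (hy i).1
  have hsum : (∑ i, util (v i) r (z i)) ≤ ∑ i, util (v i) r (y i) := by
    have e1 := agg_util v r p' z
    have e2 := agg_util v r p' y
    -- e : ∑ util p' w = ∑ util r w + ∑ f (r f - p' f) * (∑ w)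
    have h1 : (∑ i, util (v i) p' (z i)) ≤ ∑ i, util (v i) p' (y i) :=
      Finset.sum_le_sum fun i _ => (hy i).2 _ (hz i).1
    have h2 : (∑ f : E, (r f - p' f) * ((∑ i, y i f : ℤ) : ℝ))
        ≤ ∑ f : E, (r f - p' f) * ((∑ i, z i f : ℤ) : ℝ) := by
      refine Finset.sum_le_sum fun f _ => ?_
      rcases eq_or_lt_of_le (hrge f) with h | h
      · rw [h]; simp
      · have hk : ((∑ i, y i f : ℤ) : ℝ) ≤ ((∑ i, z i f : ℤ) : ℝ) := by
          have := key f h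
          rw [hys f]
          exact_mod_cast this
        have : (0:ℝ) ≤ r f - p' f := by linarith
        exact mul_le_mul_of_nonneg_left hk this
    linarith
  have heq : ∀ i, util (v i) r (y i) = util (v i) r (z i) := by
    intro i
    by_contra hne
    have hlt : util (v i) r (y i) < util (v i) r (z i) := lt_of_le_of_ne (hpt i) hne
    have : (∑ k, util (v k) r (y k)) < ∑ k, util (v k) r (z k) :=
      Finset.sum_lt_sum (fun k _ => hpt k) ⟨i, mem_univ i, hlt⟩
    linarith
  exact ⟨y, fun i => ⟨(hy i).1, fun w hw => ((hz i).2 w hw).trans (heq i).ge⟩, hys⟩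
/-- Monotonicity in supply: if the supply decreases from `b` to `b' ≤ b`, both the
minimal and the maximal Walrasian prices can only increase on the remaining items. -/
theorem stmt18 {N : Type*} [Fintype N] (b b' : E → ℤ)
    (hb' : 0 ≤ b') (hbb : b' ≤ b)
    (v : N → (E → ℤ) → ℤ) (hsgs : ∀ i, MNatConcave b (v i))
    (hmono : ∀ i, ∀ x ∈ Box b, ∀ y ∈ Box b, x ≤ y → v i x ≤ v i y) :
    -- minimal Walrasian prices
    (∀ p p' : E → ℝ, 0 ≤ p → 0 ≤ p' →
      Walrasian b v p → (∀ r : E → ℝ, 0 ≤ r → Walrasian b v r → p ≤ r) →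
      Walrasian b' v p' → (∀ r : E → ℝ, 0 ≤ r → Walrasian b' v r → p' ≤ r) →
      ∀ e : E, 0 < b' e → p e ≤ p' e) ∧
    -- maximal Walrasian prices
    (∀ p p' : E → ℝ, 0 ≤ p → 0 ≤ p' →
      Walrasian b v p → (∀ r : E → ℝ, 0 ≤ r → Walrasian b v r → r ≤ p) →
      Walrasian b' v p' → (∀ r : E → ℝ, 0 ≤ r → Walrasian b' v r → r ≤ p') →
      ∀ e : E, 0 < b' e → p e ≤ p' e) := by
  constructor
  · intro p p' hp0 hp'0 hwp hpmin hwp' _ e he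
    have hqW := min_aux hb' hbb v hsgs hwp hwp'
    have hq0 : (0 : E → ℝ) ≤ fun f => if 0 < b' f then min (p f) (p' f) else p f := by
      intro f
      dsimp only
      split
      · exact le_min (hp0 f) (hp'0 f)
      · exact hp0 f
    have hle := hpmin _ hq0 hqW e
    rw [if_pos he] at hle
    exact hle.trans (min_le_right _ _)
  · intro p p' hp0 hp'0 hwp _ hwp' hp'max e he
    have hrW := max_aux hb' hbb v hsgs hwp hwp'
    have hr0 : (0 : E → ℝ) ≤ fun f => if 0 < b' f then max (p f) (p' f) else p' f := by
      intro f
      dsimp only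
      split
      · exact le_trans (hp0 f) (le_max_left _ _)
      · exact hp'0 f
    have hle := hp'max _ hr0 hrW e
    rw [if_pos he] at hle
    exact (le_max_left (p e) (p' e)).trans hle
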